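/- Let G be a graph, c ∈ ℕ, and let G^c be the c-chordal completion of G, obtained by adding an edge between every pair of distinct vertices lying in a common maximal c-inseparable set of G. Then for every A ⊆ V(G): G[A] is a maximal c-atom of G if and only if G^c[A] is a maximal c-atom of G^c. -/

import Mathlib

variable {V : Type*}

/-- `C` separates `x` and `y` in `G`: neither endpoint is in `C` and every walk
from `x` to `y` meets `C`. -/
def Separates (G : SimpleGraph V) (C : Set V) (x y : V) : Prop :=
  x ∉ C ∧ y ∉ C ∧ ∀ p : G.Walk x y, ∃ z ∈ C, z ∈ p.support

/-- `x` and `y` are `c`-inseparable in `G`: no clique of size at most `c` separates them. -/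
def CInsep (G : SimpleGraph V) (c : ℕ) (x y : V) : Prop :=
  ∀ C : Set V, G.IsClique C → C.ncard ≤ c → ¬ Separates G C x y

/-- A set is `c`-inseparable if all its pairs of vertices are. -/
def InsepSet (G : SimpleGraph V) (c : ℕ) (A : Set V) : Prop :=
  ∀ x ∈ A, ∀ y ∈ A, CInsep G c x y

/-- Maximal `c`-inseparable set. -/
def MaxInsepSet (G : SimpleGraph V) (c : ℕ) (A : Set V) : Prop :=
  InsepSet G c A ∧ ∀ B, A ⊆ B → InsepSet G c B → B = A

/-- `C` separates `x` and `y` within the induced subgraph `G[A]`. -/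
def SeparatesWithin (G : SimpleGraph V) (A C : Set V) (x y : V) : Prop :=
  x ∈ A \ C ∧ y ∈ A \ C ∧
    ∀ p : G.Walk x y, (∀ z ∈ p.support, z ∈ A) → ∃ z ∈ C, z ∈ p.support

/-- `G[A]` is a `c`-atom: it has no clique separator of size at most `c`. -/
def AtomWithin (G : SimpleGraph V) (c : ℕ) (A : Set V) : Prop :=
  ¬ ∃ C : Set V, C ⊆ A ∧ G.IsClique C ∧ C.ncard ≤ c ∧ ∃ x y, SeparatesWithin G A C x y

/-- `G[A]` is a maximal `c`-atom of `G`. -/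
def MaxAtom (G : SimpleGraph V) (c : ℕ) (A : Set V) : Prop :=
  AtomWithin G c A ∧ ∀ B, A ⊆ B → AtomWithin G c B → B = A

/-- The `c`-chordal completion of `G`: every maximal `c`-inseparable set is turned
into a clique. -/
def chordalComp (G : SimpleGraph V) (c : ℕ) : SimpleGraph V where
  Adj u v := u ≠ v ∧ (G.Adj u v ∨ ∃ A : Set V, MaxInsepSet G c A ∧ u ∈ A ∧ v ∈ A)
  symm := by
    constructor
    rintro u v ⟨h1, h2⟩
    refine ⟨h1.symm, ?_⟩
    rcases h2 with h | ⟨A, hA, hu, hv⟩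
    · exact Or.inl h.symm
    · exact Or.inr ⟨A, hA, hv, hu⟩
  loopless := by constructor; rintro u ⟨h, -⟩; exact h rfl

open SimpleGraph

/-! ### Basic lemmas about `Separates` -/

lemma sep_symm {G : SimpleGraph V} {C : Set V} {x y : V}
    (h : Separates G C x y) : Separates G C y x := by
  refine ⟨h.2.1, h.1, fun p => ?_⟩
  obtain ⟨z, hz1, hz2⟩ := h.2.2 p.reverse
  refine ⟨z, hz1, ?_⟩
  rwa [Walk.support_reverse, List.mem_reverse] at hz2

lemma sep_self {G : SimpleGraph V} {C : Set V} {x : V} :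
    ¬ Separates G C x x := by
  rintro ⟨hx, -, hw⟩
  obtain ⟨z, hz1, hz2⟩ := hw Walk.nil
  simp only [Walk.support_nil, List.mem_singleton] at hz2
  exact hx (hz2 ▸ hz1)

lemma cinsep_refl {G : SimpleGraph V} {c : ℕ} {x : V} : CInsep G c x x :=
  fun _ _ _ h => sep_self h

lemma adj_cinsep {G : SimpleGraph V} {c : ℕ} {x y : V} (h : G.Adj x y) :
    CInsep G c x y := by
  rintro C _ _ ⟨hx, hy, hw⟩
  obtain ⟨z, hz1, hz2⟩ := hw (Walk.cons h Walk.nil)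
  simp only [Walk.support_cons, Walk.support_nil, List.mem_cons, List.mem_singleton,
    List.not_mem_nil, or_false] at hz2
  rcases hz2 with rfl | rfl
  · exact hx hz1
  · exact hy hz1

lemma not_sep_walk {G : SimpleGraph V} {C : Set V} {x y : V}
    (h : ¬ Separates G C x y) (hx : x ∉ C) (hy : y ∉ C) :
    ∃ p : G.Walk x y, ∀ z ∈ C, z ∉ p.support := by
  unfold Separates at h
  push_neg at h
  exact h hx hy

/-! ### Atoms give inseparable sets -/

lemma atom_insep [Finite V] {G : SimpleGraph V} {c : ℕ} {A : Set V}
    (h : AtomWithin G c A) : InsepSet G c A := by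
  intro x hx y hy C hC hcard hsep
  refine h ⟨C ∩ A, Set.inter_subset_right, hC.subset Set.inter_subset_left,
    le_trans (Set.ncard_le_ncard Set.inter_subset_left (Set.toFinite C)) hcard,
    x, y, ⟨hx, fun h' => hsep.1 h'.1⟩, ⟨hy, fun h' => hsep.2.1 h'.1⟩, fun p hp => ?_⟩
  obtain ⟨z, hz1, hz2⟩ := hsep.2.2 p
  exact ⟨z, ⟨hz1, hp z hz2⟩, hz2⟩

/-! ### Extension to a maximal inseparable set -/

lemma exists_maxinsep [Fintype V] {G : SimpleGraph V} {c : ℕ} {A : Set V}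
    (hA : InsepSet G c A) : ∃ S, A ⊆ S ∧ MaxInsepSet G c S := by
  obtain ⟨S, hS, hmax⟩ := Set.Finite.exists_maximalFor id
    {B | A ⊆ B ∧ InsepSet G c B} (Set.toFinite _) ⟨A, subset_rfl, hA⟩
  exact ⟨S, hS.1, hS.2, fun B hSB hB => Set.Subset.antisymm (hmax ⟨hS.1.trans hSB, hB⟩ hSB) hSB⟩

/-! ### Walk shortening through a clique -/

lemma exit_lemma {G : SimpleGraph V} (K D : Set V)
    (hbd : ∀ u v, u ∈ K → G.Adj u v → v ∈ K ∨ v ∈ D) :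
    ∀ {a b : V} (r : G.Walk a b), a ∈ K → b ∉ K →
      ∃ d ∈ D, ∃ r' : G.Walk d b,
        (∀ v ∈ r'.support, v ∈ r.support) ∧ r'.length < r.length := by
  intro a b r
  induction r with
  | nil => intro ha hb; exact absurd ha hb
  | @cons u v w h r ih =>
    intro ha hb
    by_cases hvK : v ∈ K
    · obtain ⟨d, hd, r', hsub, hlen⟩ := ih hvK hb
      refine ⟨d, hd, r', fun z hz => ?_, ?_⟩
      · rw [Walk.support_cons]; exact List.mem_cons_of_mem _ (hsub z hz)
      · rw [Walk.length_cons]; omega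
    · refine ⟨v, (hbd u v ha h).resolve_left hvK, r, fun z hz => ?_, ?_⟩
      · rw [Walk.support_cons]; exact List.mem_cons_of_mem _ hz
      · rw [Walk.length_cons]; omega

lemma shorten {G : SimpleGraph V} [DecidableEq V] {K D : Set V} (hclD : G.IsClique D)
    (hbd : ∀ u v, u ∈ K → G.Adj u v → v ∈ K ∨ v ∈ D)
    {x y w : V} (p : G.Walk x y) (hw : w ∈ p.support) (hwK : w ∈ K)
    (hx : x ∉ K) (hy : y ∉ K) :
    ∃ q : G.Walk x y, (∀ v ∈ q.support, v ∈ p.support) ∧ q.length < p.length := by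
  set p1 := p.takeUntil w hw with hp1
  set p2 := p.dropUntil w hw with hp2
  have hlen : p1.length + p2.length = p.length := by
    have := congrArg Walk.length (p.take_spec hw)
    rwa [Walk.length_append] at this
  obtain ⟨d1, hd1, r1, hsub1, hlen1⟩ := exit_lemma K D hbd p1.reverse hwK hx
  obtain ⟨d2, hd2, r2, hsub2, hlen2⟩ := exit_lemma K D hbd p2 hwK hy
  rw [Walk.length_reverse] at hlen1
  have hsub1' : ∀ v ∈ r1.support, v ∈ p.support := by
    intro v hv
    have := hsub1 v hv
    rw [Walk.support_reverse, List.mem_reverse] at this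
    exact p.support_takeUntil_subset hw this
  have hsub2' : ∀ v ∈ r2.support, v ∈ p.support :=
    fun v hv => p.support_dropUntil_subset hw (hsub2 v hv)
  by_cases hd : d1 = d2
  · subst hd
    refine ⟨r1.reverse.append r2, fun v hv => ?_, ?_⟩
    · rw [Walk.mem_support_append_iff] at hv
      rcases hv with hv | hv
      · rw [Walk.support_reverse, List.mem_reverse] at hv
        exact hsub1' v hv
      · exact hsub2' v hv
    · rw [Walk.length_append, Walk.length_reverse]; omega
  · refine ⟨r1.reverse.append (Walk.cons (hclD hd1 hd2 hd) r2), fun v hv => ?_, ?_⟩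
    · rw [Walk.mem_support_append_iff] at hv
      rcases hv with hv | hv
      · rw [Walk.support_reverse, List.mem_reverse] at hv
        exact hsub1' v hv
      · rw [Walk.support_cons, List.mem_cons] at hv
        rcases hv with rfl | hv
        · exact hsub1' v r1.start_mem_support
        · exact hsub2' v hv
    · rw [Walk.length_append, Walk.length_reverse, Walk.length_cons]; omega

/-! ### Maximal inseparable sets are atoms -/

lemma maxinsep_atom {G : SimpleGraph V} {c : ℕ} {S : Set V}
    (hS : MaxInsepSet G c S) : AtomWithin G c S := by
  classical
  rintro ⟨C, _, hclC, hcard, x, y, hx, hy, hwalk⟩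
  have hxy : CInsep G c x y := hS.1 x hx.1 y hy.1
  obtain ⟨p0, hp0⟩ := not_sep_walk (hxy C hclC hcard) hx.2 hy.2
  suffices h : ∀ n (p : G.Walk x y), p.length = n → (∀ z ∈ C, z ∉ p.support) → False from
    h _ p0 rfl hp0
  intro n
  induction n using Nat.strong_induction_on with
  | _ n ih =>
    intro p hplen havoid
    by_cases hsub : ∀ z ∈ p.support, z ∈ S
    · obtain ⟨z, hz1, hz2⟩ := hwalk p hsub
      exact havoid z hz1 hz2
    · push_neg at hsub
      obtain ⟨w, hwp, hwS⟩ := hsub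
      have hins : ¬ InsepSet G c (insert w S) := by
        intro hins
        exact hwS (hS.2 (insert w S) (Set.subset_insert _ _) hins ▸ Set.mem_insert w S)
      unfold InsepSet CInsep at hins
      push_neg at hins
      obtain ⟨a, ha, b, hb, D, hclD, hDcard, hsepD⟩ := hins
      have key : ∃ s ∈ S, Separates G D w s := by
        rcases Set.mem_insert_iff.mp ha with ha' | ha'
        · rcases Set.mem_insert_iff.mp hb with hb' | hb'
          · rw [ha', hb'] at hsepD
            exact absurd hsepD sep_self
          · rw [ha'] at hsepD
            exact ⟨b, hb', hsepD⟩
        · rcases Set.mem_insert_iff.mp hb with hb' | hb'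
          · rw [hb'] at hsepD
            exact ⟨a, ha', sep_symm hsepD⟩
          · exact absurd hsepD (hS.1 a ha' b hb' D hclD hDcard)
      obtain ⟨s, hsS, hsep⟩ := key
      set K : Set V := {v | ∃ r : G.Walk w v, ∀ z ∈ r.support, z ∉ D} with hK
      have hwK : w ∈ K := ⟨Walk.nil, by
        intro z hz
        simp only [Walk.support_nil, List.mem_singleton] at hz
        exact hz ▸ hsep.1⟩
      have hKS : ∀ t ∈ S, t ∉ K := by
        rintro t ht ⟨r, hr⟩
        have htD : t ∉ D := hr t r.end_mem_support
        obtain ⟨q, hq⟩ := not_sep_walk (hS.1 t ht s hsS D hclD hDcard) htD hsep.2.1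
        obtain ⟨z, hz1, hz2⟩ := hsep.2.2 (r.append q)
        rw [Walk.mem_support_append_iff] at hz2
        rcases hz2 with hz2 | hz2
        · exact hr z hz2 hz1
        · exact hq z hz1 hz2
      have hbd : ∀ u v, u ∈ K → G.Adj u v → v ∈ K ∨ v ∈ D := by
        rintro u v ⟨r, hr⟩ hadj
        by_cases hvD : v ∈ D
        · exact Or.inr hvD
        · refine Or.inl ⟨r.append (Walk.cons hadj Walk.nil), ?_⟩
          intro z hz
          rw [Walk.mem_support_append_iff] at hz
          rcases hz with hz | hz
          · exact hr z hz
          · simp only [Walk.support_cons, Walk.support_nil, List.mem_cons,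
              List.mem_singleton, List.not_mem_nil, or_false] at hz
            rcases hz with rfl | rfl
            · exact hr z r.end_mem_support
            · exact hvD
      obtain ⟨q, hqsub, hqlen⟩ :=
        shorten hclD hbd p hwp hwK (hKS x hx.1) (hKS y hy.1)
      exact ih q.length (hplen ▸ hqlen) q rfl (fun z hz hzq => havoid z hz (hqsub z hzq))

/-! ### Maximal atoms are exactly maximal inseparable sets -/

lemma maxatom_iff_maxinsep [Fintype V] {G : SimpleGraph V} {c : ℕ} {A : Set V} :
    MaxAtom G c A ↔ MaxInsepSet G c A := by
  constructor
  · rintro ⟨hat, hmax⟩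
    obtain ⟨S, hAS, hS⟩ := exists_maxinsep (atom_insep hat)
    have hSA : S = A := hmax S hAS (maxinsep_atom hS)
    exact hSA ▸ hS
  · intro hS
    exact ⟨maxinsep_atom hS, fun B hSB hB => hS.2 B hSB (atom_insep hB)⟩

/-! ### Relating `G` and its `c`-chordal completion -/

lemma le_comp {G : SimpleGraph V} {c : ℕ} : G ≤ chordalComp G c := by
  intro u v h
  exact ⟨h.ne, Or.inl h⟩

lemma sep_up {G : SimpleGraph V} {c : ℕ} {C : Set V} {x y : V}
    (hC : G.IsClique C) (hcard : C.ncard ≤ c) (h : Separates G C x y) :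
    Separates (chordalComp G c) C x y := by
  refine ⟨h.1, h.2.1, fun p => ?_⟩
  by_contra hcon
  push_neg at hcon
  have main : ∀ (a b : V) (p : (chordalComp G c).Walk a b),
      (∀ z ∈ p.support, z ∉ C) → ∃ q : G.Walk a b, ∀ z ∈ q.support, z ∉ C := by
    intro a b p
    induction p with
    | nil => exact fun hp => ⟨Walk.nil, hp⟩
    | @cons u v w had p ih =>
      intro hp
      have hp' : ∀ z ∈ p.support, z ∉ C := fun z hz =>
        hp z (by rw [Walk.support_cons]; exact List.mem_cons_of_mem _ hz)
      obtain ⟨q, hq⟩ := ih hp'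
      have huC : u ∉ C := hp u (by rw [Walk.support_cons]; exact List.mem_cons_self)
      have hvC : v ∉ C := hp' v p.start_mem_support
      rcases had.2 with h' | ⟨S, hSmax, hu, hv⟩
      · refine ⟨Walk.cons h' q, fun z hz => ?_⟩
        rw [Walk.support_cons, List.mem_cons] at hz
        rcases hz with rfl | hz
        · exact huC
        · exact hq z hz
      · obtain ⟨r, hr⟩ := not_sep_walk (hSmax.1 u hu v hv C hC hcard) huC hvC
        refine ⟨r.append q, fun z hz => ?_⟩
        rw [Walk.mem_support_append_iff] at hz
        rcases hz with hz | hz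
        · exact fun hzC => hr z hzC hz
        · exact hq z hz
  obtain ⟨q, hq⟩ := main x y p (fun z hz hzC => hcon z hzC hz)
  obtain ⟨z, hz1, hz2⟩ := h.2.2 q
  exact hq z hz2 hz1

lemma cinsep_down {G : SimpleGraph V} {c : ℕ} {x y : V}
    (h : CInsep (chordalComp G c) c x y) : CInsep G c x y :=
  fun C hC hcard hsep => h C (hC.mono le_comp) hcard (sep_up hC hcard hsep)

lemma comp_clique_insep {G : SimpleGraph V} {c : ℕ} {S : Set V}
    (hS : MaxInsepSet G c S) : InsepSet (chordalComp G c) c S := by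
  intro u hu v hv
  by_cases huv : u = v
  · exact huv ▸ cinsep_refl
  · exact adj_cinsep ⟨huv, Or.inr ⟨S, hS, hu, hv⟩⟩

lemma maxinsep_comp_iff [Fintype V] {G : SimpleGraph V} {c : ℕ} {S : Set V} :
    MaxInsepSet G c S ↔ MaxInsepSet (chordalComp G c) c S := by
  constructor
  · intro hS
    refine ⟨comp_clique_insep hS, fun B hSB hB => ?_⟩
    exact hS.2 B hSB (fun u hu v hv => cinsep_down (hB u hu v hv))
  · intro hS
    have hSi : InsepSet G c S := fun u hu v hv => cinsep_down (hS.1 u hu v hv)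
    refine ⟨hSi, fun B hSB hB => ?_⟩
    obtain ⟨S', hBS', hS'⟩ := exists_maxinsep hB
    have h1 : S' = S := hS.2 S' (hSB.trans hBS') (comp_clique_insep hS')
    exact Set.Subset.antisymm (h1 ▸ hBS') hSB

/-- `G[A]` is a maximal `c`-atom of `G` iff `G^c[A]` is a maximal `c`-atom of the
`c`-chordal completion `G^c`. -/
theorem stmt4 [Fintype V] (G : SimpleGraph V) (c : ℕ) (A : Set V) :
    MaxAtom G c A ↔ MaxAtom (chordalComp G c) c A := by
  rw [maxatom_iff_maxinsep, maxatom_iff_maxinsep, maxinsep_comp_iff]
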